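/- Let K be a field and let the involution τ act on the rational function field K(y₁,...,y₆) by swapping y₁ ↔ y₄, y₂ ↔ y₅, y₃ ↔ y₆. Then the fixed field K(y₁,...,y₆)^{⟨τ⟩} equals K(z₁,...,z₆), where z₁ = y₁+y₄, z₂ = y₂+y₅, z₃ = y₃+y₆, z₄ = y₁y₄, z₅ = y₁y₅+y₄y₂, z₆ = y₁y₆+y₄y₃. This holds for fields of any characteristic, including characteristic 2. -/

import Mathlib

open IntermediateField in
set_option maxHeartbeats 1000000 in
set_option synthInstance.maxHeartbeats 200000 in
/-- For the involution `τ` of `K(y₁,…,y₆)` swapping `yᵢ ↔ y_{i+3}`, the fixed field is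
`K(y₁+y₄, y₂+y₅, y₃+y₆, y₁y₄, y₁y₅+y₄y₂, y₁y₆+y₄y₃)`, over any field `K`. -/
theorem fixed_field_of_swap_involution (K : Type*) [Field K]
    (τ : FractionRing (MvPolynomial (Fin 6) K) ≃ₐ[K] FractionRing (MvPolynomial (Fin 6) K)) :
    letI R := MvPolynomial (Fin 6) K
    letI F := FractionRing R
    letI Y : Fin 6 → F := fun i => algebraMap R F (MvPolynomial.X i)
    (τ (Y 0) = Y 3) → (τ (Y 3) = Y 0) → (τ (Y 1) = Y 4) → (τ (Y 4) = Y 1) →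
    (τ (Y 2) = Y 5) → (τ (Y 5) = Y 2) →
    IntermediateField.fixedField (Subgroup.closure {τ}) =
      IntermediateField.adjoin K
        {Y 0 + Y 3, Y 1 + Y 4, Y 2 + Y 5,
         Y 0 * Y 3, Y 0 * Y 4 + Y 3 * Y 1, Y 0 * Y 5 + Y 3 * Y 2} := by
  intro h03 h30 h14 h41 h25 h52
  set R := MvPolynomial (Fin 6) K
  set F := FractionRing R with hF
  set Y : Fin 6 → F := fun i => algebraMap R F (MvPolynomial.X i) with hYdef
  set S : Set F := {Y 0 + Y 3, Y 1 + Y 4, Y 2 + Y 5,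
         Y 0 * Y 3, Y 0 * Y 4 + Y 3 * Y 1, Y 0 * Y 5 + Y 3 * Y 2} with hS
  set G := Subgroup.closure {τ} with hG
  set L := IntermediateField.adjoin K S with hL
  -- basic facts
  have hinj : Function.Injective (algebraMap R F) := IsFractionRing.injective R F
  have hYinj : Function.Injective Y := fun i j h => MvPolynomial.X_injective (hinj h)
  have hne : Y 3 - Y 0 ≠ 0 := sub_ne_zero.mpr (fun h => by simpa using hYinj h)
  -- τ fixes every generator
  have hfix : ∀ s ∈ S, τ s = s := by
    intro s hs
    rcases hs with rfl | rfl | rfl | rfl | rfl | rfl <;>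
      simp only [map_add, map_mul, h03, h30, h14, h41, h25, h52] <;> ring
  -- direction 1 : L ≤ fixedField G
  have hLle : L ≤ IntermediateField.fixedField G := by
    rw [hL, IntermediateField.adjoin_le_iff]
    intro s hs
    show s ∈ MulAction.fixedPoints G F
    rintro ⟨g, hg⟩
    show g s = s
    induction hg using Subgroup.closure_induction with
    | mem g hg => rw [Set.mem_singleton_iff.mp hg]; exact hfix s hs
    | one => rfl
    | mul a b _ _ ha hb => simp [AlgEquiv.mul_apply, hb, ha]
    | inv a _ ha => exact (AlgEquiv.symm_apply_eq a).mpr ha.symm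
  -- generators as elements of L
  have hzmem : ∀ s ∈ S, s ∈ L := fun s hs => IntermediateField.subset_adjoin K S hs
  have hz1 : Y 0 + Y 3 ∈ L := hzmem _ (by rw [hS]; left; rfl)
  have hz2 : Y 1 + Y 4 ∈ L := hzmem _ (by rw [hS]; right; left; rfl)
  have hz3 : Y 2 + Y 5 ∈ L := hzmem _ (by rw [hS]; right; right; left; rfl)
  have hz4 : Y 0 * Y 3 ∈ L := hzmem _ (by rw [hS]; right; right; right; left; rfl)
  have hz5 : Y 0 * Y 4 + Y 3 * Y 1 ∈ L := hzmem _ (by rw [hS]; right; right; right; right; left; rfl)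
  have hz6 : Y 0 * Y 5 + Y 3 * Y 2 ∈ L := hzmem _ (by rw [hS]; right; right; right; right; right; rfl)
  -- the big adjoin is everything
  have hM : IntermediateField.adjoin K (S ∪ {Y 0}) = ⊤ := by
    set M := IntermediateField.adjoin K (S ∪ {Y 0}) with hMdef
    have hsub : ∀ s ∈ S, s ∈ M := fun s hs =>
      IntermediateField.subset_adjoin K _ (Or.inl hs)
    have hY0 : Y 0 ∈ M := IntermediateField.subset_adjoin K _ (Or.inr rfl)
    have hY3 : Y 3 ∈ M := by
      have := hsub _ (show Y 0 + Y 3 ∈ S by rw [hS]; left; rfl)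
      have h' : Y 3 = (Y 0 + Y 3) - Y 0 := by ring
      rw [h']; exact sub_mem this hY0
    have hsubne : Y 3 - Y 0 ∈ M := sub_mem hY3 hY0
    have hY1 : Y 1 ∈ M := by
      have hz2' := hsub _ (show Y 1 + Y 4 ∈ S by rw [hS]; right; left; rfl)
      have hz5' := hsub _ (show Y 0 * Y 4 + Y 3 * Y 1 ∈ S by
        rw [hS]; right; right; right; right; left; rfl)
      have key : Y 1 = ((Y 0 * Y 4 + Y 3 * Y 1) - Y 0 * (Y 1 + Y 4)) / (Y 3 - Y 0) := by
        rw [eq_div_iff hne]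
        ring
      rw [key]
      exact div_mem (sub_mem hz5' (mul_mem hY0 hz2')) hsubne
    have hY4 : Y 4 ∈ M := by
      have hz2' := hsub _ (show Y 1 + Y 4 ∈ S by rw [hS]; right; left; rfl)
      have h' : Y 4 = (Y 1 + Y 4) - Y 1 := by ring
      rw [h']; exact sub_mem hz2' hY1
    have hY2 : Y 2 ∈ M := by
      have hz3' := hsub _ (show Y 2 + Y 5 ∈ S by rw [hS]; right; right; left; rfl)
      have hz6' := hsub _ (show Y 0 * Y 5 + Y 3 * Y 2 ∈ S by
        rw [hS]; right; right; right; right; right; rfl)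
      have key : Y 2 = ((Y 0 * Y 5 + Y 3 * Y 2) - Y 0 * (Y 2 + Y 5)) / (Y 3 - Y 0) := by
        rw [eq_div_iff hne]
        ring
      rw [key]
      exact div_mem (sub_mem hz6' (mul_mem hY0 hz3')) hsubne
    have hY5 : Y 5 ∈ M := by
      have hz3' := hsub _ (show Y 2 + Y 5 ∈ S by rw [hS]; right; right; left; rfl)
      have h' : Y 5 = (Y 2 + Y 5) - Y 2 := by ring
      rw [h']; exact sub_mem hz3' hY2
    have hYall : ∀ i, Y i ∈ M := by
      intro i
      fin_cases i <;> assumption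
    have hpoly : ∀ p : R, algebraMap R F p ∈ M := by
      intro p
      induction p using MvPolynomial.induction_on with
      | C a =>
        have h := M.algebraMap_mem a
        rw [IsScalarTower.algebraMap_apply K R F, MvPolynomial.algebraMap_eq] at h
        exact h
      | add p q hp hq => rw [map_add]; exact add_mem hp hq
      | mul_X p i hp => rw [map_mul]; exact mul_mem hp (hYall i)
    rw [eq_top_iff]
    intro x _
    obtain ⟨p, q, hq, rfl⟩ := IsFractionRing.div_surjective (A := R) x
    exact div_mem (hpoly p) (hpoly q)
  -- quadratic minimal polynomial of Y 0 over L
  set z1 : L := ⟨Y 0 + Y 3, hz1⟩ with hz1'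
  set z4 : L := ⟨Y 0 * Y 3, hz4⟩ with hz4'
  set m : Polynomial L := Polynomial.X ^ 2 - Polynomial.C z1 * Polynomial.X + Polynomial.C z4
    with hmdef
  have hm : m.Monic := by rw [hmdef]; monicity!
  have hdeg : m.natDegree = 2 := by rw [hmdef]; compute_degree!
  have hm1 : m ≠ 1 := fun h => by simp [h] at hdeg
  have haev : Polynomial.aeval (Y 0) m = 0 := by
    rw [hmdef]
    simp only [map_add, map_sub, map_mul, map_pow, Polynomial.aeval_X, Polynomial.aeval_C,
      IntermediateField.algebraMap_apply, hz1', hz4']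
    ring
  have hint : IsIntegral L (Y 0) := ⟨m, hm, by rwa [← Polynomial.aeval_def]⟩
  have htop : IntermediateField.adjoin L {Y 0} = ⊤ := by
    apply IntermediateField.restrictScalars_injective K
    rw [IntermediateField.adjoin_adjoin_left, IntermediateField.restrictScalars_top, hM]
  -- conclusion
  refine le_antisymm ?_ hLle
  intro x hx
  have hτG : τ ∈ G := Subgroup.subset_closure rfl
  have hτx : τ x = x := hx ⟨τ, hτG⟩
  have hx' : x ∈ Algebra.adjoin L {Y 0} := by
    rw [← IntermediateField.adjoin_simple_toSubalgebra_of_isAlgebraic hint.isAlgebraic]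
    have hxt : x ∈ (⊤ : IntermediateField L F) := trivial
    rw [← htop] at hxt
    exact hxt
  rw [Algebra.adjoin_singleton_eq_range_aeval] at hx'
  obtain ⟨p, hp⟩ := hx'
  set r := p %ₘ m with hrdef
  have hxr : x = Polynomial.aeval (Y 0) r := by
    have hdiv := Polynomial.modByMonic_add_div p m
    calc x = Polynomial.aeval (Y 0) p := hp.symm
    _ = Polynomial.aeval (Y 0) (r + m * (p /ₘ m)) := by rw [hdiv]
    _ = Polynomial.aeval (Y 0) r + Polynomial.aeval (Y 0) m * Polynomial.aeval (Y 0) (p /ₘ m) := by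
        rw [map_add, map_mul]
    _ = Polynomial.aeval (Y 0) r := by rw [haev]; ring
  have hrd : r.natDegree ≤ 1 := by
    have hlt := Polynomial.natDegree_modByMonic_lt p hm hm1
    rw [← hrdef, hdeg] at hlt
    omega
  have hrX := Polynomial.eq_X_add_C_of_natDegree_le_one hrd
  set a := r.coeff 0 with ha
  set b := r.coeff 1 with hb
  have hxab : x = (b : F) * Y 0 + (a : F) := by
    rw [hxr]
    conv_lhs => rw [hrX]
    simp only [map_add, map_mul, Polynomial.aeval_X, Polynomial.aeval_C,
      IntermediateField.algebraMap_apply]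
  have hτa : τ (a : F) = (a : F) := hLle a.2 ⟨τ, hτG⟩
  have hτb : τ (b : F) = (b : F) := hLle b.2 ⟨τ, hτG⟩
  have hswap : (b : F) * Y 3 + (a : F) = (b : F) * Y 0 + (a : F) := by
    conv_rhs => rw [← hxab, ← hτx, hxab]
    rw [map_add, map_mul, hτa, hτb, h03]
  have hb0 : (b : F) = 0 := by
    have hz : (b : F) * (Y 3 - Y 0) = 0 := by linear_combination hswap
    rcases mul_eq_zero.mp hz with h | h
    · exact h
    · exact absurd h hne
  have hxa : x = (a : F) := by rw [hxab, hb0]; ring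
  rw [hxa]
  exact a.2
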